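/- Let P be a pattern of length m, T a text of length n with m ≤ n ≤ (3/2)m, and k a positive integer with k ≤ m. Suppose Occ_k(P,T) ≠ ∅ and that Q is a primitive string with 1 ≤ |Q| ≤ m/(128k) and HD(P,Q^*) < 2k. Then the fragment T' := T[min Occ_k(P,T) .. m + max Occ_k(P,T)) satisfies HD(T',Q^*) < 6k, and every position in Occ_k(P,T') is a multiple of |Q|. -/

import Mathlib

/-- Hamming distance between (the length-`m` prefixes of) two strings,
given as functions `ℕ → α`. -/
def hd {α : Type*} [DecidableEq α] (m : ℕ) (X Y : ℕ → α) : ℕ :=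
  ((Finset.range m).filter fun i => X i ≠ Y i).card

/-- The (finite) set of `k`-mismatch occurrences of a pattern `P` of length `m`
in a text `T` of length `n ≥ m`. -/
def OccF {α : Type*} [DecidableEq α] (k m n : ℕ) (P T : ℕ → α) : Finset ℕ :=
  (Finset.range (n - m + 1)).filter fun i => hd m P (fun t => T (i + t)) ≤ k

/-- `HD(S, Q^*)`: Hamming distance between the length-`len` string `S`
and the infinite repetition of the length-`q` string `Q` (cut to length `len`). -/
def HDstar {α : Type*} [DecidableEq α] (len q : ℕ) (S Q : ℕ → α) : ℕ :=
  ((Finset.range len).filter fun i => S i ≠ Q (i % q)).card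

/-- A string of length `q` (given as `ℕ → α`) is primitive if it is not a power `R^e`
with integer exponent `e ≥ 2` (where `R` is necessarily its prefix of length `q/e`). -/
def Primitive {α : Type*} (q : ℕ) (Q : ℕ → α) : Prop :=
  ¬ ∃ r e : ℕ, 2 ≤ e ∧ q = e * r ∧ ∀ i < q, Q i = Q (i % r)

lemma tri_card {α : Type*} [DecidableEq α] (s : Finset ℕ) (f g h : ℕ → α) :
    (s.filter fun t => f t ≠ h t).card ≤
      (s.filter fun t => f t ≠ g t).card + (s.filter fun t => g t ≠ h t).card := by
  calc (s.filter fun t => f t ≠ h t).card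
      ≤ ((s.filter fun t => f t ≠ g t) ∪ (s.filter fun t => g t ≠ h t)).card := by
        apply Finset.card_le_card
        intro t ht
        simp only [Finset.mem_filter, Finset.mem_union] at ht ⊢
        rcases ht with ⟨hts, hne⟩
        by_cases h1 : f t = g t
        · exact Or.inr ⟨hts, by rw [← h1]; exact hne⟩
        · exact Or.inl ⟨hts, h1⟩
    _ ≤ _ := Finset.card_union_le _ _

lemma symm_card {α : Type*} [DecidableEq α] (s : Finset ℕ) (f g : ℕ → α) :
    (s.filter fun t => f t ≠ g t).card = (s.filter fun t => g t ≠ f t).card := by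
  congr 1
  apply Finset.filter_congr
  intro t _
  simp only [ne_comm]

lemma exists_rot {α : Type*} (q : ℕ) (Q : ℕ → α) (hprim : Primitive q Q)
    {r : ℕ} (hr : 0 < r) (hrq : r < q) :
    ∃ j < q, Q ((j + r) % q) ≠ Q j := by
  by_contra hcon
  push_neg at hcon
  have hq : 0 < q := lt_trans hr hrq
  haveI : NeZero q := ⟨hq.ne'⟩
  set f : ZMod q → α := fun x => Q x.val with hf
  have hstep : ∀ x : ZMod q, f (x + (r : ZMod q)) = f x := by
    intro x
    have hv : (x + (r : ZMod q)).val = (x.val + r) % q := by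
      rw [ZMod.val_add, ZMod.val_natCast, Nat.add_mod_mod]
    have hxlt : x.val < q := ZMod.val_lt x
    simp only [hf]
    rw [hv]
    exact hcon x.val hxlt
  have hz : ∀ (t : ℤ) (x : ZMod q), f (x + t • (r : ZMod q)) = f x := by
    intro t
    induction t using Int.induction_on with
    | zero => simp
    | succ n ih =>
      intro x
      have h1 : x + ((n : ℤ) + 1) • (r : ZMod q) = (x + (n : ℤ) • (r : ZMod q)) + r := by
        rw [add_smul, one_smul]; ring
      rw [h1, hstep, ih]
    | pred n ih =>
      intro x
      have h1 : x + (-(n : ℤ) - 1) • (r : ZMod q) + (r : ZMod q) = x + (-(n : ℤ)) • (r : ZMod q) := by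
        rw [sub_smul, one_smul]; ring
      calc f (x + (-(n : ℤ) - 1) • (r : ZMod q))
          = f (x + (-(n : ℤ) - 1) • (r : ZMod q) + (r : ZMod q)) := (hstep _).symm
        _ = f (x + (-(n : ℤ)) • (r : ZMod q)) := by rw [h1]
        _ = f x := ih x
  set g := Nat.gcd r q with hg
  have hgpos : 0 < g := Nat.gcd_pos_of_pos_left _ hr
  have hgdvd : g ∣ q := Nat.gcd_dvd_right r q
  have hgler : g ≤ r := Nat.le_of_dvd hr (Nat.gcd_dvd_left r q)
  have hglt : g < q := lt_of_le_of_lt hgler hrq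
  have hcast : (g : ZMod q) = (Nat.gcdA r q) • (r : ZMod q) := by
    have hb := Nat.gcd_eq_gcd_ab r q
    have h2 : ((Nat.gcd r q : ℤ) : ZMod q) =
        (((r : ℤ) * Nat.gcdA r q + (q : ℤ) * Nat.gcdB r q : ℤ) : ZMod q) := by
      rw [← hb]
    push_cast at h2
    simp only [ZMod.natCast_self, zero_mul, add_zero] at h2
    rw [zsmul_eq_mul, ← hg] at *
    rw [h2]; ring
  have hgstep : ∀ x : ZMod q, f (x + (g : ZMod q)) = f x := by
    intro x
    rw [hcast]
    exact hz _ x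
  have hper : ∀ i, i < q → Q i = Q (i % g) := by
    intro i
    induction i using Nat.strong_induction_on with
    | _ i ih =>
      intro hiq
      by_cases hig : i < g
      · rw [Nat.mod_eq_of_lt hig]
      · push_neg at hig
        have h1 : f ((i : ℕ) : ZMod q) = Q i := by
          simp only [hf, ZMod.val_natCast, Nat.mod_eq_of_lt hiq]
        have h2 : ((i : ℕ) : ZMod q) = ((i - g : ℕ) : ZMod q) + (g : ZMod q) := by
          rw [← Nat.cast_add, Nat.sub_add_cancel hig]
        have h3 : f ((i : ℕ) : ZMod q) = f (((i - g : ℕ) : ZMod q)) := by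
          rw [h2, hgstep]
        have h4 : f (((i - g : ℕ) : ZMod q)) = Q (i - g) := by
          simp only [hf, ZMod.val_natCast, Nat.mod_eq_of_lt (show i - g < q by omega)]
        have h5 := ih (i - g) (by omega) (by omega)
        rw [Nat.mod_eq_sub_mod hig]
        rw [← h1, h3, h4, h5]
  apply hprim
  refine ⟨g, q / g, ?_, ?_, hper⟩
  · have heq : q / g * g = q := Nat.div_mul_cancel hgdvd
    by_contra hcon2
    push_neg at hcon2
    have hle : q / g * g ≤ 1 * g := Nat.mul_le_mul_right g (by omega)
    rw [heq, one_mul] at hle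
    omega
  · rw [Nat.div_mul_cancel hgdvd]

lemma count_rot {α : Type*} [DecidableEq α] {q : ℕ} (Q : ℕ → α) (hprim : Primitive q Q)
    (hq : 0 < q) {d : ℕ} (hnd : ¬ q ∣ d) (L : ℕ) :
    L / q ≤ ((Finset.range L).filter fun u => Q ((u + d) % q) ≠ Q (u % q)).card := by
  have hr0 : 0 < d % q := Nat.pos_of_ne_zero fun h => hnd (Nat.dvd_of_mod_eq_zero h)
  have hrq : d % q < q := Nat.mod_lt d hq
  obtain ⟨j₀, hj₀q, hj₀⟩ := exists_rot q Q hprim hr0 hrq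
  have hmain := Finset.card_le_card_of_injOn (fun j => j₀ + j * q)
    (s := Finset.range (L / q))
    (t := (Finset.range L).filter fun u => Q ((u + d) % q) ≠ Q (u % q)) ?_ ?_
  · simpa using hmain
  · intro j hj
    simp only [Finset.mem_coe, Finset.mem_range] at hj ⊢
    refine Finset.mem_filter.mpr ⟨Finset.mem_range.mpr ?_, ?_⟩
    · have h1 : (j + 1) * q ≤ (L / q) * q := Nat.mul_le_mul_right q (by omega)
      have h2 : (L / q) * q ≤ L := Nat.div_mul_le_self L q
      have h3 : (j + 1) * q = j * q + q := by ring
      linarith [hj₀q]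
    · have hm1 : (j₀ + j * q) % q = j₀ := by
        rw [Nat.add_mul_mod_self_right, Nat.mod_eq_of_lt hj₀q]
      have hm2 : (j₀ + j * q + d) % q = (j₀ + d % q) % q := by
        have h4 : j₀ + j * q + d = (j₀ + d) + j * q := by ring
        rw [h4, Nat.add_mul_mod_self_right, Nat.add_mod_mod]
      rw [hm1, hm2]
      exact hj₀
  · intro x _ y _ hxy
    simp only at hxy
    have h5 : x * q = y * q := Nat.add_left_cancel hxy
    exact Nat.eq_of_mul_eq_mul_right hq h5

/-- for `m ≤ n ≤ (3/2)m`, `1 ≤ k ≤ m`, `Occ_k(P,T) ≠ ∅`, and a primitive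
string `Q` with `1 ≤ |Q| ≤ m/(128k)` and `HD(P,Q^*) < 2k`, the fragment
`T' := T[min Occ_k(P,T) .. m + max Occ_k(P,T))` satisfies `HD(T',Q^*) < 6k`, and every
position in `Occ_k(P,T')` is a multiple of `|Q|`. -/
theorem stmt_13 {α : Type*} [DecidableEq α] (m n k q : ℕ)
    (hmn : m ≤ n) (hn : 2 * n ≤ 3 * m) (hk1 : 1 ≤ k) (hkm : k ≤ m)
    (P T Q : ℕ → α)
    (hq : 1 ≤ q) (hqk : 128 * k * q ≤ m) (hprim : Primitive q Q)
    (hPQ : HDstar m q P Q < 2 * k)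
    (hne : (OccF k m n P T).Nonempty) :
    HDstar (m + (OccF k m n P T).max' hne - (OccF k m n P T).min' hne) q
        (fun t => T ((OccF k m n P T).min' hne + t)) Q < 6 * k
    ∧ ∀ i ∈ OccF k m (m + (OccF k m n P T).max' hne - (OccF k m n P T).min' hne) P
        (fun t => T ((OccF k m n P T).min' hne + t)), q ∣ i := by
  classical
  have hq0 : 0 < q := hq
  set S := OccF k m n P T with hSdef
  set i₀ := S.min' hne with hi₀def
  set i₁ := S.max' hne with hi₁def
  have h0 : i₀ ∈ S := S.min'_mem hne
  have h1 : i₁ ∈ S := S.max'_mem hne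
  have hi01 : i₀ ≤ i₁ := Finset.min'_le S i₁ h1
  rw [hSdef] at h0 h1
  simp only [OccF, hd, Finset.mem_filter, Finset.mem_range] at h0 h1
  obtain ⟨h0r, h0k⟩ := h0
  obtain ⟨h1r, h1k⟩ := h1
  simp only [HDstar] at hPQ
  -- basic numeric facts
  have hd2 : 2 * (i₁ - i₀) ≤ m := by omega
  obtain ⟨K, hK⟩ : ∃ K, K = k * q := ⟨_, rfl⟩
  have hqk' : 128 * K ≤ m := by
    have hKe : 128 * K = 128 * k * q := by rw [hK]; ring
    linarith
  -- triangle bounds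
  have B0 : ((Finset.range m).filter fun t => T (i₀ + t) ≠ Q (t % q)).card < 3 * k := by
    have htri := tri_card (Finset.range m) (fun t => T (i₀ + t)) P (fun t => Q (t % q))
    have hsym := symm_card (Finset.range m) (fun t => T (i₀ + t)) P
    omega
  have B1 : ((Finset.range m).filter fun t => T (i₁ + t) ≠ Q (t % q)).card < 3 * k := by
    have htri := tri_card (Finset.range m) (fun t => T (i₁ + t)) P (fun t => Q (t % q))
    have hsym := symm_card (Finset.range m) (fun t => T (i₁ + t)) P
    omega
  -- step 1: q ∣ i₁ - i₀
  have hdvd : q ∣ (i₁ - i₀) := by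
    by_contra hnd
    have hcount := count_rot Q hprim hq0 hnd (m - (i₁ - i₀))
    have hV0 : ((Finset.range (m - (i₁ - i₀))).filter fun u =>
        T (i₀ + (u + (i₁ - i₀))) ≠ Q ((u + (i₁ - i₀)) % q)).card ≤
        ((Finset.range m).filter fun t => T (i₀ + t) ≠ Q (t % q)).card := by
      apply Finset.card_le_card_of_injOn (fun u => u + (i₁ - i₀))
      · intro u hu
        simp only [Finset.mem_coe, Finset.mem_filter, Finset.mem_range] at hu ⊢
        exact ⟨by omega, hu.2⟩
      · intro x _ y _ hxy
        simp only at hxy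
        omega
    have hV1 : ((Finset.range (m - (i₁ - i₀))).filter fun u =>
        T (i₁ + u) ≠ Q (u % q)).card ≤
        ((Finset.range m).filter fun t => T (i₁ + t) ≠ Q (t % q)).card := by
      apply Finset.card_le_card
      exact Finset.filter_subset_filter _ (Finset.range_subset_range.mpr (by omega))
    have hsub : ((Finset.range (m - (i₁ - i₀))).filter fun u =>
          Q ((u + (i₁ - i₀)) % q) ≠ Q (u % q)) ⊆
        ((Finset.range (m - (i₁ - i₀))).filter fun u =>
          T (i₀ + (u + (i₁ - i₀))) ≠ Q ((u + (i₁ - i₀)) % q)) ∪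
        ((Finset.range (m - (i₁ - i₀))).filter fun u => T (i₁ + u) ≠ Q (u % q)) := by
      intro u hu
      simp only [Finset.mem_filter, Finset.mem_union, Finset.mem_range] at hu ⊢
      by_cases hc : T (i₀ + (u + (i₁ - i₀))) ≠ Q ((u + (i₁ - i₀)) % q)
      · exact Or.inl ⟨hu.1, hc⟩
      · push_neg at hc
        refine Or.inr ⟨hu.1, ?_⟩
        have he : i₁ + u = i₀ + (u + (i₁ - i₀)) := by omega
        rw [he, hc]
        exact hu.2
    have hcard := (Finset.card_le_card hsub).trans (Finset.card_union_le _ _)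
    have hlow : 64 * k ≤ (m - (i₁ - i₀)) / q := by
      rw [Nat.le_div_iff_mul_le hq0]
      have h64 : 64 * k * q = 64 * K := by rw [hK]; ring
      rw [h64]
      omega
    have hfin := le_trans hlow hcount
    linarith
  have hmodshift : ∀ t, (i₁ - i₀) ≤ t → (t - (i₁ - i₀)) % q = t % q := by
    intro t ht
    obtain ⟨c, hc⟩ := hdvd
    have h3 : t = (t - (i₁ - i₀)) + q * c := by omega
    conv_rhs => rw [h3]
    rw [Nat.add_mul_mod_self_left]
  -- conclusion 1
  have hL : m + i₁ - i₀ = m + (i₁ - i₀) := by omega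
  have hG1 : ((Finset.range (m + (i₁ - i₀))).filter fun t =>
      T (i₀ + t) ≠ Q (t % q)).card < 6 * k := by
    have hsplit : (Finset.range (m + (i₁ - i₀))).filter (fun t => T (i₀ + t) ≠ Q (t % q)) ⊆
        ((Finset.range m).filter fun t => T (i₀ + t) ≠ Q (t % q)) ∪
        ((Finset.Ico m (m + (i₁ - i₀))).filter fun t => T (i₀ + t) ≠ Q (t % q)) := by
      intro t ht
      simp only [Finset.mem_filter, Finset.mem_union, Finset.mem_range, Finset.mem_Ico] at ht ⊢
      by_cases hlt : t < m
      · exact Or.inl ⟨hlt, ht.2⟩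
      · exact Or.inr ⟨⟨by omega, ht.1⟩, ht.2⟩
    have hpc : ((Finset.Ico m (m + (i₁ - i₀))).filter fun t => T (i₀ + t) ≠ Q (t % q)).card ≤
        ((Finset.range m).filter fun t => T (i₁ + t) ≠ Q (t % q)).card := by
      apply Finset.card_le_card_of_injOn (fun t => t - (i₁ - i₀))
      · intro t ht
        simp only [Finset.mem_coe, Finset.mem_filter, Finset.mem_Ico, Finset.mem_range] at ht ⊢
        obtain ⟨⟨htm, htM⟩, hcond⟩ := ht
        refine ⟨by omega, ?_⟩
        have he1 : i₁ + (t - (i₁ - i₀)) = i₀ + t := by omega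
        rw [he1, hmodshift t (by omega)]
        exact hcond
      · intro x hx y hy hxy
        simp only [Finset.mem_coe, Finset.mem_filter, Finset.mem_Ico] at hx hy
        simp only at hxy
        omega
    have hcard := (Finset.card_le_card hsplit).trans (Finset.card_union_le _ _)
    omega
  constructor
  · rw [hL]
    simp only [HDstar]
    exact hG1
  · intro i hi
    rw [hL] at hi
    simp only [OccF, hd, Finset.mem_filter, Finset.mem_range] at hi
    obtain ⟨hir, hik⟩ := hi
    have hi_le : i ≤ i₁ - i₀ := by omega
    by_contra hni
    have Bi : ((Finset.range m).filter fun t => T (i₀ + (i + t)) ≠ Q (t % q)).card < 3 * k := by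
      have htri := tri_card (Finset.range m) (fun t => T (i₀ + (i + t))) P (fun t => Q (t % q))
      have hsym := symm_card (Finset.range m) (fun t => T (i₀ + (i + t))) P
      omega
    have hcount := count_rot Q hprim hq0 hni m
    have hW0 : ((Finset.range m).filter fun u =>
        T (i₀ + (u + i)) ≠ Q ((u + i) % q)).card ≤
        ((Finset.range (m + (i₁ - i₀))).filter fun t => T (i₀ + t) ≠ Q (t % q)).card := by
      apply Finset.card_le_card_of_injOn (fun u => u + i)
      · intro u hu
        simp only [Finset.mem_coe, Finset.mem_filter, Finset.mem_range] at hu ⊢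
        exact ⟨by omega, hu.2⟩
      · intro x _ y _ hxy
        simp only at hxy
        omega
    have hsub : ((Finset.range m).filter fun u => Q ((u + i) % q) ≠ Q (u % q)) ⊆
        ((Finset.range m).filter fun u => T (i₀ + (u + i)) ≠ Q ((u + i) % q)) ∪
        ((Finset.range m).filter fun u => T (i₀ + (i + u)) ≠ Q (u % q)) := by
      intro u hu
      simp only [Finset.mem_filter, Finset.mem_union, Finset.mem_range] at hu ⊢
      by_cases hc : T (i₀ + (u + i)) ≠ Q ((u + i) % q)
      · exact Or.inl ⟨hu.1, hc⟩
      · push_neg at hc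
        refine Or.inr ⟨hu.1, ?_⟩
        have he : i₀ + (i + u) = i₀ + (u + i) := by omega
        rw [he, hc]
        exact hu.2
    have hcard := (Finset.card_le_card hsub).trans (Finset.card_union_le _ _)
    have hlow : 128 * k ≤ m / q := by
      rw [Nat.le_div_iff_mul_le hq0]
      exact hqk
    have hfin := le_trans hlow hcount
    linarith
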